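/- Let (Ω, 𝒫) be a probability space and let A_1 : Ω → ℝ^{I_1×R}, A_2 : Ω → ℝ^{I_2×R}, A_3 : Ω → ℝ^{I_3×R} be random matrices such that the 3R columns {a_r^(n) : n ∈ {1,2,3}, r ∈ Fin R} are mutually independent, each column a_r^(n) is zero mean with square-integrable entries, and E[a_r^(n)(i)·a_r^(n)(j)] = R_n(i,j) for covariance matrices R_n with θ_n := Tr(R_n). Define the random 3-way tensor X by X(i_1,i_2,i_3) = Σ_{r=1}^R A_1(i_1,r)·A_2(i_2,r)·A_3(i_3,r). Then the expected squared Frobenius norm satisfies E[Σ_{i_1,i_2,i_3} X(i_1,i_2,i_3)²] = R·θ_1·θ_2·θ_3. -/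

import Mathlib

open MeasureTheory ProbabilityTheory Finset

lemma iIndepFun_congr_ae {ι : Type*} {β : ι → Type*} {m : ∀ i, MeasurableSpace (β i)}
    {Ω : Type*} [MeasurableSpace Ω] {μ : Measure Ω} {f g : ∀ i, Ω → β i}
    (h : iIndepFun (m := m) f μ) (hfg : ∀ i, f i =ᵐ[μ] g i) : iIndepFun (m := m) g μ := by
  rw [iIndepFun_iff_measure_inter_preimage_eq_mul] at h ⊢
  intro S sets hsets
  have h1 : ∀ i : ι, μ (g i ⁻¹' sets i) = μ (f i ⁻¹' sets i) := by
    intro i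
    refine measure_congr ?_
    filter_upwards [hfg i] with ω hω
    show (ω ∈ g i ⁻¹' sets i) = (ω ∈ f i ⁻¹' sets i)
    simp [Set.mem_preimage, hω]
  have h2 : μ (⋂ i ∈ S, g i ⁻¹' sets i) = μ (⋂ i ∈ S, f i ⁻¹' sets i) := by
    refine measure_congr ?_
    have hAll : ∀ᵐ ω ∂μ, ∀ i ∈ S, f i ω = g i ω :=
      (Filter.eventually_all_finset S).2 fun i _ => hfg i
    filter_upwards [hAll] with ω hω
    show (ω ∈ ⋂ i ∈ S, g i ⁻¹' sets i) = (ω ∈ ⋂ i ∈ S, f i ⁻¹' sets i)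
    simp only [eq_iff_iff, Set.mem_iInter, Set.mem_preimage]
    constructor <;> intro H i hi
    · rw [hω i hi]; exact H i hi
    · rw [← hω i hi]; exact H i hi
  rw [h2, h S hsets]
  exact Finset.prod_congr rfl fun i hi => (h1 i).symm

lemma integral_prod_of_iIndepFun {ι : Type*} [DecidableEq ι]
    {Ω : Type*} [MeasurableSpace Ω] {μ : Measure Ω} [IsProbabilityMeasure μ]
    {f : ι → Ω → ℝ}
    (h : iIndepFun (m := fun _ => (inferInstance : MeasurableSpace ℝ)) f μ)
    (hmeas : ∀ i, Measurable (f i)) (hint : ∀ i, Integrable (f i) μ)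
    (S : Finset ι) :
    Integrable (fun ω => ∏ i ∈ S, f i ω) μ ∧
      ∫ ω, ∏ i ∈ S, f i ω ∂μ = ∏ i ∈ S, ∫ ω, f i ω ∂μ := by
  classical
  induction S using Finset.induction_on with
  | empty => simp [integrable_const]
  | insert a s hi ih =>
    have hI : IndepFun (∏ j ∈ s, f j) (f a) μ :=
      h.indepFun_finsetProd_of_notMem hmeas hi
    have hint2 : Integrable ((∏ j ∈ s, f j) * f a) μ := by
      refine hI.integrable_mul ?_ (hint a)
      have : (∏ j ∈ s, f j) = fun ω => ∏ j ∈ s, f j ω := by funext ω; simp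
      rw [this]; exact ih.1
    have hintegral : integral μ ((∏ j ∈ s, f j) * f a)
        = integral μ (∏ j ∈ s, f j) * integral μ (f a) := by
      refine hI.integral_mul_eq_mul_integral ?_ (hint a).1
      have : (∏ j ∈ s, f j) = fun ω => ∏ j ∈ s, f j ω := by funext ω; simp
      rw [this]; exact ih.1.1
    have hfun : (fun ω => ∏ i ∈ insert a s, f i ω) = (∏ j ∈ s, f j) * f a := by
      funext ω
      simp [Finset.prod_insert hi, mul_comm]
    constructor
    · rw [hfun]; exact hint2
    · show integral μ (fun ω => ∏ i ∈ insert a s, f i ω) = _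
      rw [hfun, hintegral, Finset.prod_insert hi]
      have : integral μ (∏ j ∈ s, f j) = ∏ i ∈ s, ∫ ω, f i ω ∂μ := by
        rw [show (∏ j ∈ s, f j) = fun ω => ∏ j ∈ s, f j ω from funext fun ω => by simp]
        exact ih.2
      rw [this]; ring

/-- Expected squared Frobenius norm of a random 3-way PARAFAC tensor with mutually
independent zero-mean columns: `E‖X‖_F² = R·θ₁·θ₂·θ₃`. -/
theorem expected_frobenius_norm_sq (R : ℕ) (hR : 1 ≤ R)
    (I : Fin 3 → ℕ) (hI : ∀ n, 1 ≤ I n)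
    {Ω : Type*} [MeasurableSpace Ω] (μ : Measure Ω) [IsProbabilityMeasure μ]
    (A : ∀ n : Fin 3, Ω → Fin (I n) → Fin R → ℝ)
    (hindep : iIndepFun
      (m := fun p : Fin 3 × Fin R => (inferInstance : MeasurableSpace (Fin (I p.1) → ℝ)))
      (fun p ω i => A p.1 ω i p.2) μ)
    (hL2 : ∀ n i r, MemLp (fun ω => A n ω i r) 2 μ)
    (hmean : ∀ n i r, ∫ ω, A n ω i r ∂μ = 0)
    (Rn : ∀ n : Fin 3, Fin (I n) → Fin (I n) → ℝ)
    (hcov : ∀ n r i j, ∫ ω, A n ω i r * A n ω j r ∂μ = Rn n i j)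
    (θ : Fin 3 → ℝ) (hθ : ∀ n, θ n = ∑ i : Fin (I n), Rn n i i)
    (X : Ω → Fin (I 0) → Fin (I 1) → Fin (I 2) → ℝ)
    (hX : ∀ ω i1 i2 i3,
      X ω i1 i2 i3 = ∑ r : Fin R, A 0 ω i1 r * A 1 ω i2 r * A 2 ω i3 r) :
    ∫ ω, (∑ i1 : Fin (I 0), ∑ i2 : Fin (I 1), ∑ i3 : Fin (I 2), X ω i1 i2 i3 ^ 2) ∂μ =
      (R : ℝ) * θ 0 * θ 1 * θ 2 := by
  classical
  -- measurable modifications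
  set B : ∀ n : Fin 3, Fin (I n) → Fin R → Ω → ℝ :=
    fun n i r => (hL2 n i r).1.mk (fun ω => A n ω i r) with hBdef
  have hBmeas : ∀ n i r, Measurable (B n i r) :=
    fun n i r => (hL2 n i r).1.stronglyMeasurable_mk.measurable
  have hABae : ∀ n i r, (fun ω => A n ω i r) =ᵐ[μ] B n i r :=
    fun n i r => (hL2 n i r).1.ae_eq_mk
  have hBL2 : ∀ n i r, MemLp (B n i r) 2 μ :=
    fun n i r => (hL2 n i r).ae_eq (hABae n i r)
  have hBmean : ∀ n i r, ∫ ω, B n i r ω ∂μ = 0 := by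
    intro n i r
    rw [← integral_congr_ae (hABae n i r)]; exact hmean n i r
  have hBcov : ∀ n r i j, ∫ ω, B n i r ω * B n j r ω ∂μ = Rn n i j := by
    intro n r i j
    rw [← hcov n r i j]
    refine (integral_congr_ae ?_).symm
    filter_upwards [hABae n i r, hABae n j r] with ω h1 h2
    rw [h1, h2]
  have hindepB : iIndepFun
      (m := fun p : Fin 3 × Fin R => (inferInstance : MeasurableSpace (Fin (I p.1) → ℝ)))
      (fun p ω i => B p.1 i p.2 ω) μ := by
    refine iIndepFun_congr_ae hindep ?_
    intro p
    have : ∀ᵐ ω ∂μ, ∀ i : Fin (I p.1), A p.1 ω i p.2 = B p.1 i p.2 ω :=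
      ae_all_iff.2 fun i => hABae p.1 i p.2
    filter_upwards [this] with ω hω
    funext i; exact hω i
  have hABall : ∀ᵐ ω ∂μ, ∀ n i r, A n ω i r = B n i r ω :=
    ae_all_iff.2 fun n => ae_all_iff.2 fun i => ae_all_iff.2 fun r => hABae n i r
  -- per-term computation
  have key : ∀ (i1 : Fin (I 0)) (i2 : Fin (I 1)) (i3 : Fin (I 2)) (r s : Fin R),
      Integrable (fun ω => B 0 i1 r ω * B 1 i2 r ω * B 2 i3 r ω *
        (B 0 i1 s ω * B 1 i2 s ω * B 2 i3 s ω)) μ ∧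
      ∫ ω, B 0 i1 r ω * B 1 i2 r ω * B 2 i3 r ω *
        (B 0 i1 s ω * B 1 i2 s ω * B 2 i3 s ω) ∂μ =
        (if r = s then Rn 0 i1 i1 * Rn 1 i2 i2 * Rn 2 i3 i3 else 0) := by
    intro i1 i2 i3 r s
    set idx : ∀ n : Fin 3, Fin (I n) :=
      Fin.cons i1 (Fin.cons i2 (Fin.cons i3 (fun x => x.elim0))) with hidx
    have hidx0 : idx 0 = i1 := rfl
    have hidx1 : idx 1 = i2 := rfl
    have hidx2 : idx 2 = i3 := rfl
    by_cases hrs : r = s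
    · subst hrs
      simp only [if_pos rfl]
      set G : Fin 3 × Fin R → Ω → ℝ := fun p ω => (B p.1 (idx p.1) p.2 ω) ^ 2 with hG
      have hGind : iIndepFun (m := fun _ => (inferInstance : MeasurableSpace ℝ)) G μ :=
        hindepB.comp (fun p v => (v (idx p.1)) ^ 2)
          (fun p => (measurable_pi_apply _).pow_const 2)
      have hGmeas : ∀ p, Measurable (G p) :=
        fun p => (hBmeas p.1 (idx p.1) p.2).pow_const 2
      have hGint : ∀ p, Integrable (G p) μ :=
        fun p => (hBL2 p.1 (idx p.1) p.2).integrable_sq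
      set S : Finset (Fin 3 × Fin R) := Finset.univ.image (fun n : Fin 3 => (n, r)) with hS
      have hprod := integral_prod_of_iIndepFun hGind hGmeas hGint S
      have hinj : ∀ x ∈ (Finset.univ : Finset (Fin 3)), ∀ y ∈ Finset.univ,
          (fun n : Fin 3 => (n, r)) x = (fun n : Fin 3 => (n, r)) y → x = y :=
        fun x _ y _ h => by simpa using congrArg Prod.fst h
      have hSprod : ∀ ω, ∏ p ∈ S, G p ω
          = B 0 i1 r ω ^ 2 * B 1 i2 r ω ^ 2 * B 2 i3 r ω ^ 2 := by
        intro ω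
        rw [hS, Finset.prod_image hinj, Fin.prod_univ_three]
        rfl
      have hfun : (fun ω => B 0 i1 r ω * B 1 i2 r ω * B 2 i3 r ω *
            (B 0 i1 r ω * B 1 i2 r ω * B 2 i3 r ω))
          = fun ω => ∏ p ∈ S, G p ω := by
        funext ω; rw [hSprod]; ring
      constructor
      · rw [hfun]; exact hprod.1
      · rw [show (∫ ω, B 0 i1 r ω * B 1 i2 r ω * B 2 i3 r ω *
            (B 0 i1 r ω * B 1 i2 r ω * B 2 i3 r ω) ∂μ)
            = ∫ ω, ∏ p ∈ S, G p ω ∂μ from by rw [← hfun]]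
        rw [hprod.2, hS, Finset.prod_image hinj, Fin.prod_univ_three]
        have e0 : ∫ ω, G (0, r) ω ∂μ = Rn 0 i1 i1 := by
          have h : (fun ω => G (0, r) ω) = fun ω => B 0 i1 r ω * B 0 i1 r ω := by
            funext ω; show B 0 (idx 0) r ω ^ 2 = _; rw [hidx0]; ring
          rw [h]; exact hBcov 0 r i1 i1
        have e1 : ∫ ω, G (1, r) ω ∂μ = Rn 1 i2 i2 := by
          have h : (fun ω => G (1, r) ω) = fun ω => B 1 i2 r ω * B 1 i2 r ω := by
            funext ω; show B 1 (idx 1) r ω ^ 2 = _; rw [hidx1]; ring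
          rw [h]; exact hBcov 1 r i2 i2
        have e2 : ∫ ω, G (2, r) ω ∂μ = Rn 2 i3 i3 := by
          have h : (fun ω => G (2, r) ω) = fun ω => B 2 i3 r ω * B 2 i3 r ω := by
            funext ω; show B 2 (idx 2) r ω ^ 2 = _; rw [hidx2]; ring
          rw [h]; exact hBcov 2 r i3 i3
        rw [e0, e1, e2]
        simp
    · -- r ≠ s
      simp only [if_neg hrs]
      set F : Fin 3 × Fin R → Ω → ℝ := fun p ω => B p.1 (idx p.1) p.2 ω with hF
      have hFind : iIndepFun (m := fun _ => (inferInstance : MeasurableSpace ℝ)) F μ :=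
        hindepB.comp (fun p v => v (idx p.1)) (fun p => measurable_pi_apply _)
      have hFmeas : ∀ p, Measurable (F p) := fun p => hBmeas p.1 (idx p.1) p.2
      have hFint : ∀ p, Integrable (F p) μ :=
        fun p => (hBL2 p.1 (idx p.1) p.2).integrable one_le_two
      set Sr : Finset (Fin 3 × Fin R) := Finset.univ.image (fun n : Fin 3 => (n, r)) with hSr
      set Ss : Finset (Fin 3 × Fin R) := Finset.univ.image (fun n : Fin 3 => (n, s)) with hSs
      have hdisj : Disjoint Sr Ss := by
        rw [Finset.disjoint_left]
        intro p hp hq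
        rw [hSr, Finset.mem_image] at hp
        rw [hSs, Finset.mem_image] at hq
        obtain ⟨n, _, rfl⟩ := hp
        obtain ⟨m, _, hm⟩ := hq
        exact hrs (congrArg Prod.snd hm).symm
      have hinjr : ∀ x ∈ (Finset.univ : Finset (Fin 3)), ∀ y ∈ Finset.univ,
          (fun n : Fin 3 => (n, r)) x = (fun n : Fin 3 => (n, r)) y → x = y :=
        fun x _ y _ h => by simpa using congrArg Prod.fst h
      have hinjs : ∀ x ∈ (Finset.univ : Finset (Fin 3)), ∀ y ∈ Finset.univ,
          (fun n : Fin 3 => (n, s)) x = (fun n : Fin 3 => (n, s)) y → x = y :=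
        fun x _ y _ h => by simpa using congrArg Prod.fst h
      have hprod := integral_prod_of_iIndepFun hFind hFmeas hFint (Sr ∪ Ss)
      have hSprod : ∀ ω, ∏ p ∈ Sr ∪ Ss, F p ω
          = B 0 i1 r ω * B 1 i2 r ω * B 2 i3 r ω *
            (B 0 i1 s ω * B 1 i2 s ω * B 2 i3 s ω) := by
        intro ω
        rw [Finset.prod_union hdisj, hSr, hSs, Finset.prod_image hinjr,
          Finset.prod_image hinjs, Fin.prod_univ_three, Fin.prod_univ_three]
        rfl
      have hfun : (fun ω => B 0 i1 r ω * B 1 i2 r ω * B 2 i3 r ω *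
            (B 0 i1 s ω * B 1 i2 s ω * B 2 i3 s ω))
          = fun ω => ∏ p ∈ Sr ∪ Ss, F p ω := by
        funext ω; rw [hSprod]
      constructor
      · rw [hfun]; exact hprod.1
      · rw [show (∫ ω, B 0 i1 r ω * B 1 i2 r ω * B 2 i3 r ω *
            (B 0 i1 s ω * B 1 i2 s ω * B 2 i3 s ω) ∂μ)
            = ∫ ω, ∏ p ∈ Sr ∪ Ss, F p ω ∂μ from by rw [← hfun]]
        rw [hprod.2]
        refine Finset.prod_eq_zero (i := ((0 : Fin 3), r)) ?_ ?_
        · exact Finset.mem_union_left _ (Finset.mem_image.2 ⟨0, Finset.mem_univ _, rfl⟩)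
        · exact hBmean 0 i1 r
  -- rewrite the integrand a.e.
  have hintegrand : (fun ω => ∑ i1 : Fin (I 0), ∑ i2 : Fin (I 1), ∑ i3 : Fin (I 2),
        X ω i1 i2 i3 ^ 2)
      =ᵐ[μ] fun ω => ∑ i1 : Fin (I 0), ∑ i2 : Fin (I 1), ∑ i3 : Fin (I 2),
        ∑ r : Fin R, ∑ s : Fin R, B 0 i1 r ω * B 1 i2 r ω * B 2 i3 r ω *
          (B 0 i1 s ω * B 1 i2 s ω * B 2 i3 s ω) := by
    filter_upwards [hABall] with ω hω
    refine Finset.sum_congr rfl fun i1 _ => Finset.sum_congr rfl fun i2 _ =>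
      Finset.sum_congr rfl fun i3 _ => ?_
    rw [hX, pow_two, Finset.sum_mul_sum]
    refine Finset.sum_congr rfl fun r _ => Finset.sum_congr rfl fun s _ => ?_
    rw [hω 0 i1 r, hω 1 i2 r, hω 2 i3 r, hω 0 i1 s, hω 1 i2 s, hω 2 i3 s]
  rw [integral_congr_ae hintegrand]
  -- push integral through the sums
  have e3 : ∀ i1 i2 i3, ∫ ω, ∑ r : Fin R, ∑ s : Fin R,
        B 0 i1 r ω * B 1 i2 r ω * B 2 i3 r ω *
          (B 0 i1 s ω * B 1 i2 s ω * B 2 i3 s ω) ∂μ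
      = ∑ r : Fin R, ∑ s : Fin R,
          (if r = s then Rn 0 i1 i1 * Rn 1 i2 i2 * Rn 2 i3 i3 else 0) := by
    intro i1 i2 i3
    rw [integral_finset_sum _ fun r _ => integrable_finset_sum _ fun s _ => (key i1 i2 i3 r s).1]
    refine Finset.sum_congr rfl fun r _ => ?_
    rw [integral_finset_sum _ fun s _ => (key i1 i2 i3 r s).1]
    exact Finset.sum_congr rfl fun s _ => (key i1 i2 i3 r s).2
  have hintlvl : ∀ (i1 : Fin (I 0)) (i2 : Fin (I 1)) (i3 : Fin (I 2)),
      Integrable (fun ω => ∑ r : Fin R, ∑ s : Fin R,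
        B 0 i1 r ω * B 1 i2 r ω * B 2 i3 r ω *
          (B 0 i1 s ω * B 1 i2 s ω * B 2 i3 s ω)) μ :=
    fun i1 i2 i3 => integrable_finset_sum _ fun r _ =>
      integrable_finset_sum _ fun s _ => (key i1 i2 i3 r s).1
  rw [integral_finset_sum _ fun i1 _ => integrable_finset_sum _ fun i2 _ =>
    integrable_finset_sum _ fun i3 _ => hintlvl i1 i2 i3]
  have step : (∑ i1 : Fin (I 0), ∫ ω, ∑ i2 : Fin (I 1), ∑ i3 : Fin (I 2),
        ∑ r : Fin R, ∑ s : Fin R, B 0 i1 r ω * B 1 i2 r ω * B 2 i3 r ω *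
          (B 0 i1 s ω * B 1 i2 s ω * B 2 i3 s ω) ∂μ)
      = ∑ i1 : Fin (I 0), ∑ i2 : Fin (I 1), ∑ i3 : Fin (I 2),
          ∑ r : Fin R, ∑ s : Fin R,
          (if r = s then Rn 0 i1 i1 * Rn 1 i2 i2 * Rn 2 i3 i3 else 0) := by
    refine Finset.sum_congr rfl fun i1 _ => ?_
    rw [integral_finset_sum _ fun i2 _ => integrable_finset_sum _ fun i3 _ => hintlvl i1 i2 i3]
    refine Finset.sum_congr rfl fun i2 _ => ?_
    rw [integral_finset_sum _ fun i3 _ => hintlvl i1 i2 i3]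
    exact Finset.sum_congr rfl fun i3 _ => e3 i1 i2 i3
  rw [step]
  -- evaluate the sums
  have collapse : ∀ (i1 : Fin (I 0)) (i2 : Fin (I 1)) (i3 : Fin (I 2)),
      (∑ r : Fin R, ∑ s : Fin R,
        (if r = s then Rn 0 i1 i1 * Rn 1 i2 i2 * Rn 2 i3 i3 else 0))
      = (R : ℝ) * (Rn 0 i1 i1 * Rn 1 i2 i2 * Rn 2 i3 i3) := by
    intro i1 i2 i3
    have : ∀ r : Fin R, (∑ s : Fin R,
        (if r = s then Rn 0 i1 i1 * Rn 1 i2 i2 * Rn 2 i3 i3 else 0))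
        = Rn 0 i1 i1 * Rn 1 i2 i2 * Rn 2 i3 i3 := by
      intro r; simp
    rw [Finset.sum_congr rfl fun r _ => this r, Finset.sum_const, Finset.card_univ,
      Fintype.card_fin, nsmul_eq_mul]
  simp_rw [collapse]
  have f3 : ∀ (i1 : Fin (I 0)) (i2 : Fin (I 1)),
      (∑ i3 : Fin (I 2), (R : ℝ) * (Rn 0 i1 i1 * Rn 1 i2 i2 * Rn 2 i3 i3))
      = (R : ℝ) * Rn 0 i1 i1 * Rn 1 i2 i2 * θ 2 := by
    intro i1 i2
    rw [hθ 2, Finset.mul_sum]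
    exact Finset.sum_congr rfl fun i3 _ => by ring
  simp_rw [f3]
  have f2 : ∀ (i1 : Fin (I 0)),
      (∑ i2 : Fin (I 1), (R : ℝ) * Rn 0 i1 i1 * Rn 1 i2 i2 * θ 2)
      = (R : ℝ) * Rn 0 i1 i1 * θ 1 * θ 2 := by
    intro i1
    rw [hθ 1, Finset.mul_sum, Finset.sum_mul]
  simp_rw [f2]
  rw [hθ 0, Finset.mul_sum, Finset.sum_mul, Finset.sum_mul]
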